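/- Let p be a prime and P a normal p-subgroup of a finite group G such that G/C_G(P) is a p-group. Then P is contained in the hypercenter Z∞(G). -/

import Mathlib

open Subgroup QuotientGroup

private lemma stmt17_aux (p : ℕ) (hp : p.Prime) : ∀ (n : ℕ) (G : Type u) [Group G]
    [Finite G] (P : Subgroup G) [instN : P.Normal], IsPGroup p ↥P →
    (∃ k : ℕ, (Subgroup.centralizer (P : Set G)).index = p ^ k) → Nat.card ↥P ≤ n →
    ∃ m : ℕ, P ≤ Subgroup.upperCentralSeries G m := by
  intro n
  induction n with
  | zero =>
    intro G _ _ P _ _ _ hcard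
    have : 0 < Nat.card ↥P := Nat.card_pos
    omega
  | succ n ih =>
    intro G _ _ P instN hPgrp hquot hcard
    haveI : Fact p.Prime := ⟨hp⟩
    rcases eq_or_ne P ⊥ with rfl | hPne
    · exact ⟨0, by simp [Subgroup.upperCentralSeries_zero]⟩
    -- the quotient by the centralizer is a p-group
    obtain ⟨k, hk⟩ := hquot
    set C := Subgroup.centralizer (P : Set G) with hC
    haveI : C.Normal := by
      constructor
      intro g hg h
      rw [hC, Subgroup.mem_centralizer_iff] at hg ⊢
      intro x hx
      have hx' : h⁻¹ * x * h ∈ P := by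
        simpa [mul_assoc] using instN.conj_mem x hx h⁻¹
      have hcomm := hg _ hx'
      calc x * (h * g * h⁻¹) = h * (h⁻¹ * x * h * g) * h⁻¹ := by group
        _ = h * (g * (h⁻¹ * x * h)) * h⁻¹ := by rw [hcomm]
        _ = h * g * h⁻¹ * x := by group
    have hQ : IsPGroup p (G ⧸ C) := IsPGroup.of_card (by rw [← Subgroup.index_eq_card]; exact hk)
    -- action of G ⧸ C on P by conjugation
    have hker : ∀ g ∈ C, MulAut.conjNormal (H := P) g = 1 := by
      intro g hg
      ext x
      have := (Subgroup.mem_centralizer_iff.mp hg) (x : G) x.2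
      simp only [MulAut.conjNormal_apply, MulAut.one_apply]
      rw [← this, mul_assoc, mul_inv_cancel, mul_one]
    let φ : G ⧸ C →* MulAut ↥P := QuotientGroup.lift C MulAut.conjNormal hker
    letI : MulAction (G ⧸ C) ↥P := MulAction.compHom _ φ
    have hsmul : ∀ (g : G) (x : ↥P), (QuotientGroup.mk g : G ⧸ C) • x = MulAut.conjNormal g x :=
      fun g x => rfl
    -- find a nontrivial element of P in the center of G
    have hone : (1 : ↥P) ∈ MulAction.fixedPoints (G ⧸ C) ↥P := by
      intro q
      induction q using QuotientGroup.induction_on with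
      | H g => rw [hsmul]; exact map_one _
    haveI : Nontrivial ↥P := P.nontrivial_iff_ne_bot.mpr hPne
    obtain ⟨m0, hm0, hcardP⟩ := hPgrp.nontrivial_iff_card.mp inferInstance
    have hdvd : p ∣ Nat.card ↥P := hcardP ▸ dvd_pow_self p hm0.ne'
    obtain ⟨b, hbfix, hb1⟩ := hQ.exists_fixed_point_of_prime_dvd_card_of_fixed_point ↥P hdvd hone
    have hbZ : (b : G) ∈ Subgroup.center G := by
      rw [Subgroup.mem_center_iff]
      intro g
      have := hbfix (QuotientGroup.mk g⁻¹)
      rw [hsmul] at this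
      have h2 : g⁻¹ * (b : G) * g⁻¹⁻¹ = (b : G) := congrArg Subtype.val this
      rw [inv_inv] at h2
      calc g * (b : G) = g * (g⁻¹ * (b : G) * g) := by rw [h2]
        _ = (b : G) * g := by group
    -- pass to the quotient by the center
    set Z := Subgroup.center G with hZ
    let f := QuotientGroup.mk' Z
    have hfsurj : Function.Surjective f := QuotientGroup.mk'_surjective Z
    set P' := P.map f with hP'
    haveI : (P').Normal := Subgroup.Normal.map ‹P.Normal› f hfsurj
    have hP'grp : IsPGroup p ↥P' := hPgrp.map f
    have hcent : (Subgroup.centralizer (P : Set G)).map f ≤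
        Subgroup.centralizer (P' : Set (G ⧸ Z)) := by
      rintro _ ⟨g, hg, rfl⟩
      rw [Subgroup.mem_centralizer_iff]
      rintro _ ⟨x, hx, rfl⟩
      rw [← map_mul, ← map_mul, (Subgroup.mem_centralizer_iff.mp hg) x hx]
    have hquot' : ∃ k' : ℕ, (Subgroup.centralizer (P' : Set (G ⧸ Z))).index = p ^ k' := by
      have h1 : (Subgroup.centralizer (P' : Set (G ⧸ Z))).index ∣ (C.map f).index :=
        Subgroup.index_dvd_of_le hcent
      have h2 : (C.map f).index ∣ C.index := Subgroup.index_map_dvd C hfsurj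
      obtain ⟨k', _, hk'⟩ := (Nat.dvd_prime_pow hp).mp (hk ▸ h1.trans h2)
      exact ⟨k', hk'⟩
    -- the cardinality strictly decreases
    have hcard' : Nat.card ↥P' < Nat.card ↥P := by
      haveI := Fintype.ofFinite ↥P
      haveI := Fintype.ofFinite ↥P'
      rw [Nat.card_eq_fintype_card, Nat.card_eq_fintype_card]
      refine Fintype.card_lt_of_surjective_not_injective
        (fun x : ↥P => (⟨f x, Subgroup.mem_map_of_mem f x.2⟩ : ↥P')) ?_ ?_
      · rintro ⟨_, x, hx, rfl⟩
        exact ⟨⟨x, hx⟩, rfl⟩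
      · intro hinj
        apply hb1
        apply hinj
        ext
        have : f (b : G) = 1 := (QuotientGroup.eq_one_iff _).mpr hbZ
        simp [this]
    obtain ⟨m, hm⟩ := ih (G ⧸ Z) P' hP'grp hquot' (by omega)
    refine ⟨m + 1, ?_⟩
    rw [← Subgroup.comap_upperCentralSeries_quotient_center]
    intro x hx
    exact hm (Subgroup.mem_map_of_mem f hx)

theorem stmt17 {G : Type*} [Group G] [Finite G] (p : ℕ) (hp : p.Prime)
    (P : Subgroup G) [P.Normal] (hPgrp : IsPGroup p ↥P)
    (hquot : ∃ k : ℕ, (Subgroup.centralizer (P : Set G)).index = p ^ k) :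
    P ≤ ⨆ n : ℕ, _root_.upperCentralSeries G n := by
  obtain ⟨m, hm⟩ := stmt17_aux p hp (Nat.card ↥P) G P hPgrp hquot le_rfl
  exact hm.trans (le_iSup (fun n => Subgroup.upperCentralSeries G n) m)
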